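/- Let D be a finite set of Dirichlet characters, 2 ≤ N₁ < N₂ ≤ R real numbers, (a_n) complex numbers with |a_n| ≤ 1, and A = {b/R : 1 ≤ b ≤ R}. Then for any positive integer k, (∑_{χ∈D} max_{α∈[0,1)} |∑_{N₁≤n≤N₂} χ(n)a_n e(αn)/n|^{2k})^{1/(2k)} ≤ (∑_{α∈A} ∑_{χ∈D} |∑_{N₁^k≤n≤N₂^k} χ(n)g(n,α)/n|²)^{1/(2k)} + O(|D|^{1/(2k)} N₂/R), where g(n,α) = ∑_{N₁≤n₁,…,n_k≤N₂, n₁⋯n_k=n} ∏_j a_{n_j} e(α n_j) and e(t) = e^{2πit}. -/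

import Mathlib

open Finset

/-- `e(t) = exp(2πit)`. -/
noncomputable def e (t : ℝ) : ℂ := Complex.exp (2 * Real.pi * Complex.I * t)

/-- The coefficient `g(n,α) = ∑_{N₁≤n₁,…,n_k≤N₂, n₁⋯n_k=n} ∏_j a_{n_j} e(α n_j)`. -/
noncomputable def gCoeff (a : ℕ → ℂ) (N₁ N₂ : ℝ) (k : ℕ) (n : ℕ) (α : ℝ) : ℂ :=
  ∑ v ∈ Fintype.piFinset (fun _ : Fin k => Finset.Icc ⌈N₁⌉₊ ⌊N₂⌋₊),
    if ∏ i, v i = n then ∏ i, (a (v i) * e (α * v i)) else 0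

lemma e_norm (t : ℝ) : ‖e t‖ = 1 := by
  rw [e, Complex.norm_exp]
  norm_num [Complex.mul_re, Complex.mul_im]

lemma e_sub_one_norm (t : ℝ) : ‖e t - 1‖ ≤ 2 * Real.pi * |t| := by
  have hθ : (2 * Real.pi * Complex.I * t) = ((2 * Real.pi * t : ℝ) : ℂ) * Complex.I := by
    push_cast; ring
  set θ : ℝ := 2 * Real.pi * t with hθdef
  have h1 : e t = Complex.cos θ + Complex.sin θ * Complex.I := by
    rw [e, hθ, Complex.exp_mul_I]
  have h2 : e t - 1 = ((Real.cos θ - 1 : ℝ) : ℂ) + ((Real.sin θ : ℝ) : ℂ) * Complex.I := by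
    rw [h1]; push_cast [Complex.ofReal_cos, Complex.ofReal_sin]; ring
  have hsq : ‖e t - 1‖ ^ 2 = (Real.cos θ - 1) ^ 2 + Real.sin θ ^ 2 := by
    rw [h2, Complex.sq_norm, Complex.normSq_add_mul_I]
  have hb : (Real.cos θ - 1) ^ 2 + Real.sin θ ^ 2 ≤ θ ^ 2 := by
    have h3 : Real.cos θ = 1 - 2 * Real.sin (θ / 2) ^ 2 := by
      have := Real.cos_two_mul' (θ / 2)
      have h4 := Real.sin_sq_add_cos_sq (θ / 2)
      rw [show 2 * (θ / 2) = θ by ring] at this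
      nlinarith
    have h5 : |Real.sin (θ / 2)| ≤ |θ / 2| := Real.abs_sin_le_abs
    have h6 : Real.sin (θ / 2) ^ 2 ≤ (θ / 2) ^ 2 := by
      rw [← sq_abs, ← sq_abs (θ/2)]; exact pow_le_pow_left₀ (abs_nonneg _) h5 2
    have h7 := Real.sin_sq_add_cos_sq θ
    nlinarith
  have : ‖e t - 1‖ ^ 2 ≤ (2 * Real.pi * |t|) ^ 2 := by
    rw [hsq]
    calc (Real.cos θ - 1) ^ 2 + Real.sin θ ^ 2 ≤ θ ^ 2 := hb
      _ ≤ (2 * Real.pi * |t|) ^ 2 := by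
          rw [hθdef]; rw [mul_pow, mul_pow, mul_pow, mul_pow, sq_abs]
  have hpos : (0:ℝ) ≤ 2 * Real.pi * |t| := by positivity
  exact (pow_le_pow_iff_left₀ (norm_nonneg _) hpos two_ne_zero).mp this

lemma e_sub_norm (x y : ℝ) : ‖e x - e y‖ ≤ 2 * Real.pi * |x - y| := by
  have h : e x - e y = e y * (e (x - y) - 1) := by
    rw [e, e, e, mul_sub, mul_one, ← Complex.exp_add]
    congr 2
    push_cast; ring
  rw [h, norm_mul, e_norm, one_mul]
  exact e_sub_one_norm _

lemma prod_mem_Icc {N₁ N₂ : ℝ} (h₁ : 0 ≤ N₁) (h₂ : 0 ≤ N₂) {k : ℕ} (v : Fin k → ℕ)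
    (hv : ∀ i, v i ∈ Finset.Icc ⌈N₁⌉₊ ⌊N₂⌋₊) :
    ∏ i, v i ∈ Finset.Icc ⌈N₁ ^ k⌉₊ ⌊N₂ ^ k⌋₊ := by
  rw [Finset.mem_Icc]
  constructor
  · calc ⌈N₁ ^ k⌉₊ ≤ ⌈N₁⌉₊ ^ k := by
          rw [Nat.ceil_le]; push_cast
          exact pow_le_pow_left₀ h₁ (Nat.le_ceil N₁) k
      _ = ∏ _i : Fin k, ⌈N₁⌉₊ := by simp
      _ ≤ ∏ i, v i := Finset.prod_le_prod' fun i _ => (Finset.mem_Icc.mp (hv i)).1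
  · calc ∏ i, v i ≤ ∏ _i : Fin k, ⌊N₂⌋₊ :=
          Finset.prod_le_prod' fun i _ => (Finset.mem_Icc.mp (hv i)).2
      _ = ⌊N₂⌋₊ ^ k := by simp
      _ ≤ ⌊N₂ ^ k⌋₊ := by
          rw [Nat.le_floor_iff (by positivity)]; push_cast
          exact pow_le_pow_left₀ (by positivity) (Nat.floor_le h₂) k

noncomputable def Ssum {q : ℕ} (χ : DirichletCharacter ℂ q) (a : ℕ → ℂ) (N₁ N₂ : ℝ) (α : ℝ) : ℂ :=
  ∑ n ∈ Finset.Icc ⌈N₁⌉₊ ⌊N₂⌋₊, χ n * a n * e (α * n) / n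

noncomputable def Tsum {q : ℕ} (χ : DirichletCharacter ℂ q) (a : ℕ → ℂ) (N₁ N₂ : ℝ) (k : ℕ)
    (β : ℝ) : ℂ :=
  ∑ n ∈ Finset.Icc ⌈N₁ ^ k⌉₊ ⌊N₂ ^ k⌋₊, χ n * gCoeff a N₁ N₂ k n β / n

lemma S_pow_eq_T {q : ℕ} (χ : DirichletCharacter ℂ q) (a : ℕ → ℂ) {N₁ N₂ : ℝ}
    (h₁ : 0 ≤ N₁) (h₂ : 0 ≤ N₂) (k : ℕ) (β : ℝ) :
    (Ssum χ a N₁ N₂ β) ^ k = Tsum χ a N₁ N₂ k β := by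
  rw [Ssum, Tsum]
  have lhs : (∑ n ∈ Finset.Icc ⌈N₁⌉₊ ⌊N₂⌋₊, χ n * a n * e (β * n) / n) ^ k
      = ∑ v ∈ Fintype.piFinset (fun _ : Fin k => Finset.Icc ⌈N₁⌉₊ ⌊N₂⌋₊),
          ∏ i, (χ (v i) * a (v i) * e (β * v i) / (v i)) := by
    calc (∑ n ∈ Finset.Icc ⌈N₁⌉₊ ⌊N₂⌋₊, χ n * a n * e (β * n) / n) ^ k
        = ∏ _i : Fin k, ∑ n ∈ Finset.Icc ⌈N₁⌉₊ ⌊N₂⌋₊, χ n * a n * e (β * n) / n := by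
          simp [Finset.prod_const]
      _ = _ := Finset.prod_univ_sum _ (fun _ (n : ℕ) => χ n * a n * e (β * n) / (n : ℂ))
  rw [lhs]
  simp only [gCoeff, Finset.mul_sum, Finset.sum_div]
  rw [Finset.sum_comm]
  refine Finset.sum_congr rfl fun v hv => ?_
  have hvmem : ∀ i, v i ∈ Finset.Icc ⌈N₁⌉₊ ⌊N₂⌋₊ := by
    simpa [Fintype.mem_piFinset] using hv
  have key : ∑ n ∈ Finset.Icc ⌈N₁ ^ k⌉₊ ⌊N₂ ^ k⌋₊,
      (χ n * if ∏ i, v i = n then ∏ i, (a (v i) * e (β * v i)) else 0) / n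
      = (χ ((∏ i, v i : ℕ)) * ∏ i, (a (v i) * e (β * v i))) / ((∏ i, v i : ℕ) : ℂ) := by
    simp only [mul_ite, mul_zero, ite_div, zero_div]
    rw [Finset.sum_ite_eq (Finset.Icc ⌈N₁ ^ k⌉₊ ⌊N₂ ^ k⌋₊) (∏ i, v i)
      (fun n => (χ n * ∏ i, (a (v i) * e (β * v i))) / (n : ℂ))]
    rw [if_pos (prod_mem_Icc h₁ h₂ v hvmem)]
  rw [key]
  simp only [mul_assoc, Finset.prod_div_distrib, Finset.prod_mul_distrib]
  rw [Nat.cast_prod, Nat.cast_prod, map_prod]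

lemma sum_pow_rpow {ι : Type*} (s : Finset ι) (f : ι → ℝ) (hf : ∀ i, 0 ≤ f i) (m : ℕ) :
    ∑ i ∈ s, |f i| ^ ((m : ℕ) : ℝ) = ∑ i ∈ s, f i ^ m :=
  Finset.sum_congr rfl fun i _ => by rw [abs_of_nonneg (hf i), Real.rpow_natCast]


/-- Discretization of the maximum over `α ∈ [0,1)` of character sums to the grid
`A = {b/R : 1 ≤ b ≤ R}`, at the cost of an error `O(|D|^{1/2k} N₂/R)`. -/
theorem stmt_8 :
    ∃ C > 0, ∀ (q : ℕ) (D : Finset (DirichletCharacter ℂ q))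
      (N₁ N₂ R : ℝ) (a : ℕ → ℂ) (k : ℕ),
      2 ≤ N₁ → N₁ < N₂ → N₂ ≤ R → (∀ n, ‖a n‖ ≤ 1) → 0 < k →
      (∑ χ ∈ D, (⨆ α : Set.Ico (0 : ℝ) 1,
          ‖∑ n ∈ Finset.Icc ⌈N₁⌉₊ ⌊N₂⌋₊, χ n * a n * e ((α : ℝ) * n) / n‖) ^ (2 * k))
        ^ ((1 : ℝ) / (2 * k)) ≤
      (∑ b ∈ Finset.Icc 1 ⌊R⌋₊, ∑ χ ∈ D,
          ‖∑ n ∈ Finset.Icc ⌈N₁ ^ k⌉₊ ⌊N₂ ^ k⌋₊,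
            χ n * gCoeff a N₁ N₂ k n ((b : ℝ) / R) / n‖ ^ 2)
        ^ ((1 : ℝ) / (2 * k)) +
      C * (D.card : ℝ) ^ ((1 : ℝ) / (2 * k)) * N₂ / R := by
  refine ⟨2 * Real.pi + 1, by positivity, ?_⟩
  intro q D N₁ N₂ R a k hN₁ h₁₂ h₂R ha hk
  have hπ := Real.pi_pos
  have hR : (0:ℝ) < R := by linarith
  have hN₂ : (0:ℝ) ≤ N₂ := by linarith
  have hN₁0 : (0:ℝ) ≤ N₁ := by linarith
  show (∑ χ ∈ D, (⨆ α : Set.Ico (0 : ℝ) 1, ‖Ssum χ a N₁ N₂ (α : ℝ)‖) ^ (2 * k))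
        ^ ((1 : ℝ) / (2 * k)) ≤
      (∑ b ∈ Finset.Icc 1 ⌊R⌋₊, ∑ χ ∈ D, ‖Tsum χ a N₁ N₂ k ((b : ℝ) / R)‖ ^ 2)
        ^ ((1 : ℝ) / (2 * k)) +
      (2 * Real.pi + 1) * (D.card : ℝ) ^ ((1 : ℝ) / (2 * k)) * N₂ / R
  set c : ℝ := 2 * Real.pi * N₂ / R with hc
  have hc0 : 0 ≤ c := by positivity
  -- basic integer facts
  have hceil2 : 2 ≤ ⌈N₁⌉₊ := by
    have h := Nat.ceil_le_ceil (R := ℝ) hN₁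
    simpa using h
  have hfloor1 : 1 ≤ ⌊R⌋₊ := Nat.le_floor (by push_cast; linarith)
  have hne : (Finset.Icc 1 ⌊R⌋₊).Nonempty := ⟨1, Finset.mem_Icc.mpr ⟨le_refl _, hfloor1⟩⟩
  have hcard : ((Finset.Icc ⌈N₁⌉₊ ⌊N₂⌋₊).card : ℝ) ≤ N₂ := by
    rw [Nat.card_Icc]
    have h1 : ⌊N₂⌋₊ + 1 - ⌈N₁⌉₊ ≤ ⌊N₂⌋₊ := by omega
    calc ((⌊N₂⌋₊ + 1 - ⌈N₁⌉₊ : ℕ) : ℝ) ≤ (⌊N₂⌋₊ : ℝ) := by exact_mod_cast h1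
      _ ≤ N₂ := Nat.floor_le hN₂
  -- perturbation lemma
  have pert : ∀ (χ : DirichletCharacter ℂ q) (α β : ℝ), |α - β| ≤ 1 / R →
      ‖Ssum χ a N₁ N₂ α - Ssum χ a N₁ N₂ β‖ ≤ c := by
    intro χ α β hab
    rw [Ssum, Ssum, ← Finset.sum_sub_distrib]
    calc ‖∑ n ∈ Finset.Icc ⌈N₁⌉₊ ⌊N₂⌋₊, (χ n * a n * e (α*n)/n - χ n * a n * e (β*n)/n)‖
        ≤ ∑ n ∈ Finset.Icc ⌈N₁⌉₊ ⌊N₂⌋₊, ‖χ n * a n * e (α*n)/n - χ n * a n * e (β*n)/n‖ :=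
          norm_sum_le _ _
      _ ≤ ∑ _n ∈ Finset.Icc ⌈N₁⌉₊ ⌊N₂⌋₊, 2 * Real.pi / R := by
          refine Finset.sum_le_sum fun n hn => ?_
          have hn2 : 2 ≤ n := le_trans hceil2 (Finset.mem_Icc.mp hn).1
          have hn0 : (0:ℝ) < (n:ℝ) := by exact_mod_cast (by omega : 0 < n)
          have heq : χ n * a n * e (α*n)/n - χ n * a n * e (β*n)/n
              = χ n * a n * (e (α*n) - e (β*n)) / n := by ring
          rw [heq, norm_div, norm_mul, norm_mul, Complex.norm_natCast]
          have h1 : ‖e (α*n) - e (β*n)‖ ≤ 2 * Real.pi * n / R := by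
            calc ‖e (α*n) - e (β*n)‖ ≤ 2 * Real.pi * |α*n - β*n| := e_sub_norm _ _
              _ = 2 * Real.pi * n * |α - β| := by
                  rw [← sub_mul, abs_mul, abs_of_nonneg (le_of_lt hn0)]; ring
              _ ≤ 2 * Real.pi * n * (1/R) := by
                  exact mul_le_mul_of_nonneg_left hab (by positivity)
              _ = 2 * Real.pi * n / R := by ring
          calc ‖χ n‖ * ‖a n‖ * ‖e (α*n) - e (β*n)‖ / (n:ℝ)
              ≤ 1 * 1 * (2 * Real.pi * n / R) / (n:ℝ) := by
                gcongr
                · exact DirichletCharacter.norm_le_one χ _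
                · exact ha n
            _ = 2 * Real.pi / R := by field_simp
      _ ≤ c := by
          rw [Finset.sum_const, nsmul_eq_mul, hc]
          calc ((Finset.Icc ⌈N₁⌉₊ ⌊N₂⌋₊).card : ℝ) * (2 * Real.pi / R)
              ≤ N₂ * (2 * Real.pi / R) := by
                exact mul_le_mul_of_nonneg_right hcard (by positivity)
            _ = 2 * Real.pi * N₂ / R := by ring
  -- grid lemma
  have grid : ∀ α : ℝ, 0 ≤ α → α < 1 → ∃ b ∈ Finset.Icc 1 ⌊R⌋₊, |α - (b:ℝ)/R| ≤ 1/R := by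
    intro α hα0 hα1
    have hαR : α * R < R := by nlinarith
    have hαR0 : 0 ≤ α * R := by positivity
    have habs : ∀ b : ℕ, |α*R - b| ≤ 1 → |α - (b:ℝ)/R| ≤ 1/R := by
      intro b h
      have heq : α - (b:ℝ)/R = (α*R - b)/R := by field_simp
      rw [heq, abs_div, abs_of_pos hR]
      gcongr
    by_cases hb : ⌊α * R⌋₊ + 1 ≤ ⌊R⌋₊
    · refine ⟨⌊α*R⌋₊ + 1, Finset.mem_Icc.mpr ⟨by omega, hb⟩, habs _ ?_⟩
      have h1 : (⌊α*R⌋₊:ℝ) ≤ α*R := Nat.floor_le hαR0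
      have h2 : α*R < ⌊α*R⌋₊ + 1 := Nat.lt_floor_add_one _
      rw [abs_le]; push_cast
      constructor <;> linarith
    · refine ⟨⌊R⌋₊, Finset.mem_Icc.mpr ⟨hfloor1, le_refl _⟩, habs _ ?_⟩
      push_neg at hb
      have hfl : ⌊R⌋₊ ≤ ⌊α*R⌋₊ := by omega
      have h3 : ((⌊R⌋₊:ℕ):ℝ) ≤ α * R :=
        le_trans (by exact_mod_cast Nat.cast_le.mpr hfl) (Nat.floor_le hαR0)
      have h4 : R < ⌊R⌋₊ + 1 := Nat.lt_floor_add_one R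
      rw [abs_le]
      constructor <;> linarith
  -- the grid max
  set M : DirichletCharacter ℂ q → ℝ :=
    fun χ => Finset.sup' (Finset.Icc 1 ⌊R⌋₊) hne (fun b => ‖Ssum χ a N₁ N₂ ((b:ℝ)/R)‖) with hM
  have hM0 : ∀ χ, 0 ≤ M χ := by
    intro χ
    have h := Finset.le_sup' (fun b : ℕ => ‖Ssum χ a N₁ N₂ ((b:ℝ)/R)‖)
      (Finset.mem_Icc.mpr ⟨le_refl 1, hfloor1⟩)
    exact le_trans (norm_nonneg _) h
  -- sup bound
  have supb : ∀ χ : DirichletCharacter ℂ q,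
      (⨆ α : Set.Ico (0:ℝ) 1, ‖Ssum χ a N₁ N₂ (α:ℝ)‖) ≤ M χ + c := by
    intro χ
    refine Real.iSup_le (fun α => ?_) (add_nonneg (hM0 χ) hc0)
    obtain ⟨b, hb, hclose⟩ := grid (α:ℝ) α.2.1 α.2.2
    calc ‖Ssum χ a N₁ N₂ (α:ℝ)‖
        ≤ ‖Ssum χ a N₁ N₂ ((b:ℝ)/R)‖ + ‖Ssum χ a N₁ N₂ (α:ℝ) - Ssum χ a N₁ N₂ ((b:ℝ)/R)‖ :=
          norm_le_norm_add_norm_sub' _ _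
      _ ≤ M χ + c := add_le_add
          (Finset.le_sup' (fun b : ℕ => ‖Ssum χ a N₁ N₂ ((b:ℝ)/R)‖) hb) (pert χ _ _ hclose)
  have sup0 : ∀ χ : DirichletCharacter ℂ q,
      0 ≤ ⨆ α : Set.Ico (0:ℝ) 1, ‖Ssum χ a N₁ N₂ (α:ℝ)‖ :=
    fun χ => Real.iSup_nonneg fun α => norm_nonneg _
  -- step 2
  have key2 : ∑ χ ∈ D, (⨆ α : Set.Ico (0:ℝ) 1, ‖Ssum χ a N₁ N₂ (α:ℝ)‖) ^ (2*k)
      ≤ ∑ χ ∈ D, (M χ + c) ^ (2*k) :=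
    Finset.sum_le_sum fun χ _ => pow_le_pow_left₀ (sup0 χ) (supb χ) _
  -- Minkowski
  have he : ((2*k : ℕ) : ℝ) = 2 * (k:ℝ) := by push_cast; ring
  have hk1 : (1:ℝ) ≤ (k:ℝ) := by exact_mod_cast hk
  have hp1 : (1:ℝ) ≤ ((2*k : ℕ) : ℝ) := by rw [he]; linarith
  have key3 : (∑ χ ∈ D, (M χ + c) ^ (2*k)) ^ ((1:ℝ)/(2*(k:ℝ)))
      ≤ (∑ χ ∈ D, M χ ^ (2*k)) ^ ((1:ℝ)/(2*(k:ℝ)))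
        + (∑ _χ ∈ D, c ^ (2*k)) ^ ((1:ℝ)/(2*(k:ℝ))) := by
    have h := Real.Lp_add_le D M (fun _ => c) hp1
    rw [sum_pow_rpow D (fun χ => M χ + c) (fun χ => add_nonneg (hM0 χ) hc0) (2*k),
      sum_pow_rpow D M hM0 (2*k), sum_pow_rpow D (fun _ => c) (fun _ => hc0) (2*k), he] at h
    exact h
  -- error term
  have kne : 2 * (k:ℝ) ≠ 0 := by positivity
  have err : (∑ _χ ∈ D, c ^ (2*k)) ^ ((1:ℝ)/(2*(k:ℝ)))
      = (D.card : ℝ) ^ ((1:ℝ)/(2*(k:ℝ))) * c := by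
    rw [Finset.sum_const, nsmul_eq_mul,
      Real.mul_rpow (by positivity) (by positivity),
      ← Real.rpow_natCast c (2*k), ← Real.rpow_mul hc0, he,
      mul_one_div, div_self kne, Real.rpow_one]
  have errle : (D.card : ℝ) ^ ((1:ℝ)/(2*(k:ℝ))) * c
      ≤ (2 * Real.pi + 1) * (D.card : ℝ) ^ ((1:ℝ)/(2*(k:ℝ))) * N₂ / R := by
    have h0 : (0:ℝ) ≤ (D.card : ℝ) ^ ((1:ℝ)/(2*(k:ℝ))) := Real.rpow_nonneg (by positivity) _
    rw [hc]
    calc (D.card : ℝ) ^ ((1:ℝ)/(2*(k:ℝ))) * (2 * Real.pi * N₂ / R)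
        = 2 * Real.pi * ((D.card : ℝ) ^ ((1:ℝ)/(2*(k:ℝ))) * N₂) / R := by ring
      _ ≤ (2 * Real.pi + 1) * ((D.card : ℝ) ^ ((1:ℝ)/(2*(k:ℝ))) * N₂) / R := by
          gcongr
          linarith
      _ = (2 * Real.pi + 1) * (D.card : ℝ) ^ ((1:ℝ)/(2*(k:ℝ))) * N₂ / R := by ring
  -- step 4
  have key4 : ∑ χ ∈ D, M χ ^ (2*k)
      ≤ ∑ b ∈ Finset.Icc 1 ⌊R⌋₊, ∑ χ ∈ D, ‖Tsum χ a N₁ N₂ k ((b:ℝ)/R)‖ ^ 2 := by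
    rw [Finset.sum_comm]
    refine Finset.sum_le_sum fun χ _ => ?_
    obtain ⟨b₀, hb₀, hMeq⟩ := Finset.exists_mem_eq_sup' hne
      (fun b => ‖Ssum χ a N₁ N₂ ((b:ℝ)/R)‖)
    rw [hM]
    simp only
    rw [hMeq, show 2*k = k*2 from mul_comm 2 k, pow_mul, ← norm_pow,
      S_pow_eq_T χ a hN₁0 hN₂ k ((b₀:ℝ)/R)]
    exact Finset.single_le_sum (f := fun b : ℕ => ‖Tsum χ a N₁ N₂ k ((b:ℝ)/R)‖ ^ 2)
      (fun b _ => by positivity) hb₀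
  -- assemble
  have hexp : (0:ℝ) ≤ (1:ℝ)/(2*(k:ℝ)) := by positivity
  calc (∑ χ ∈ D, (⨆ α : Set.Ico (0:ℝ) 1, ‖Ssum χ a N₁ N₂ (α:ℝ)‖) ^ (2*k)) ^ ((1:ℝ)/(2*(k:ℝ)))
      ≤ (∑ χ ∈ D, (M χ + c) ^ (2*k)) ^ ((1:ℝ)/(2*(k:ℝ))) :=
        Real.rpow_le_rpow (Finset.sum_nonneg fun χ _ => pow_nonneg (sup0 χ) _) key2 hexp
    _ ≤ (∑ χ ∈ D, M χ ^ (2*k)) ^ ((1:ℝ)/(2*(k:ℝ)))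
        + (∑ _χ ∈ D, c ^ (2*k)) ^ ((1:ℝ)/(2*(k:ℝ))) := key3
    _ ≤ (∑ b ∈ Finset.Icc 1 ⌊R⌋₊, ∑ χ ∈ D, ‖Tsum χ a N₁ N₂ k ((b:ℝ)/R)‖ ^ 2) ^ ((1:ℝ)/(2*(k:ℝ)))
        + (2 * Real.pi + 1) * (D.card : ℝ) ^ ((1:ℝ)/(2*(k:ℝ))) * N₂ / R := by
        refine add_le_add ?_ ?_
        · exact Real.rpow_le_rpow (Finset.sum_nonneg fun χ _ => pow_nonneg (hM0 χ) _) key4 hexp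
        · rw [err]; exact errle
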